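/- The curves γ_u are C^{1,1}: in particular, at s = u the left and right derivatives of γ_u agree and equal (1,1), and the derivative is Lipschitz near s = u. -/

import Mathlib

noncomputable def f (y : ℝ) : ℝ :=
  4 / 3 * ((1 + Real.sqrt y) ^ ((3 : ℝ) / 2) - 1) + 2 * Real.sqrt y

/-- `f y` expressed through `x = √y`. -/
noncomputable def F0 (x : ℝ) : ℝ := 4 / 3 * ((1 + x) ^ ((3 : ℝ) / 2) - 1) + 2 * x

lemma f_eq_F0 (y : ℝ) : f y = F0 (Real.sqrt y) := rfl

lemma rpow_three_halves (x : ℝ) (hx : 0 ≤ x) :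
    x ^ ((3 : ℝ) / 2) = Real.sqrt x ^ 3 := by
  have : ((3 : ℝ) / 2) = (1/2 : ℝ) * (3 : ℕ) := by norm_num
  rw [this, Real.rpow_mul hx, Real.rpow_natCast, Real.sqrt_eq_rpow]

lemma F0_growth {a b : ℝ} (ha : 0 ≤ a) (hab : a ≤ b) :
    4 * (b - a) ≤ F0 b - F0 a := by
  have hb : 0 ≤ b := ha.trans hab
  set p := Real.sqrt (1 + b) with hp
  set q := Real.sqrt (1 + a) with hq
  have hq1 : 1 ≤ q := by
    have := Real.sqrt_le_sqrt (show (1:ℝ) ≤ 1 + a by linarith)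
    simpa [hq] using this
  have hp1 : 1 ≤ p := by
    have := Real.sqrt_le_sqrt (show (1:ℝ) ≤ 1 + b by linarith)
    simpa [hp] using this
  have hpq : q ≤ p := Real.sqrt_le_sqrt (by linarith)
  have hp2 : p ^ 2 = 1 + b := Real.sq_sqrt (by linarith)
  have hq2 : q ^ 2 = 1 + a := Real.sq_sqrt (by linarith)
  have h1 : F0 b = 4 / 3 * (p ^ 3 - 1) + 2 * b := by
    rw [F0, rpow_three_halves _ (by linarith)]
  have h2 : F0 a = 4 / 3 * (q ^ 3 - 1) + 2 * a := by
    rw [F0, rpow_three_halves _ (by linarith)]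
  rw [h1, h2]
  have key : (3 / 2 : ℝ) * (p ^ 2 - q ^ 2) ≤ p ^ 3 - q ^ 3 := by
    nlinarith [mul_nonneg (sub_nonneg.2 hpq) (sub_nonneg.2 hq1),
      mul_nonneg (sub_nonneg.2 hpq) (sub_nonneg.2 hp1),
      mul_nonneg (mul_nonneg (sub_nonneg.2 hpq) (sub_nonneg.2 hq1)) (sub_nonneg.2 hp1),
      sq_nonneg (p - q)]
  nlinarith [key]

lemma F0_mono {a b : ℝ} (ha : 0 ≤ a) (hab : a ≤ b) : F0 a ≤ F0 b := by
  have := F0_growth ha hab; linarith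

section Finv

variable {finv : ℝ → ℝ}

lemma F0_sqrt_finv (h_right : ∀ s ∈ Set.Ici (0 : ℝ), f (finv s) = s)
    {s : ℝ} (hs : 0 ≤ s) : F0 (Real.sqrt (finv s)) = s := by
  rw [← f_eq_F0]; exact h_right s (Set.mem_Ici.2 hs)

/-- `√ ∘ finv` is `1/4`-Lipschitz on `[0,∞)`. -/
lemma sqrt_finv_lip (h_right : ∀ s ∈ Set.Ici (0 : ℝ), f (finv s) = s)
    {s t : ℝ} (hs : 0 ≤ s) (ht : 0 ≤ t) :
    |Real.sqrt (finv s) - Real.sqrt (finv t)| ≤ 1 / 4 * |s - t| := by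
  set a := Real.sqrt (finv s) with ha
  set b := Real.sqrt (finv t) with hb
  have ha0 : 0 ≤ a := Real.sqrt_nonneg _
  have hb0 : 0 ≤ b := Real.sqrt_nonneg _
  have hFa : F0 a = s := F0_sqrt_finv h_right hs
  have hFb : F0 b = t := F0_sqrt_finv h_right ht
  rcases le_total a b with h | h
  · have := F0_growth ha0 h
    rw [hFa, hFb] at this
    rw [abs_of_nonpos (by linarith), abs_of_nonpos (by linarith)]
    linarith
  · have := F0_growth hb0 h
    rw [hFa, hFb] at this
    rw [abs_of_nonneg (by linarith), abs_of_nonneg (by linarith)]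
    linarith

lemma f_zero : f 0 = 0 := by
  simp [f, Real.sqrt_zero]

lemma finv_zero (h_left : ∀ t ∈ Set.Ici (0 : ℝ), finv (f t) = t) : finv 0 = 0 := by
  have := h_left 0 (Set.mem_Ici.2 le_rfl)
  rwa [f_zero] at this

lemma sqrt_finv_le (h_left : ∀ t ∈ Set.Ici (0 : ℝ), finv (f t) = t)
    (h_right : ∀ s ∈ Set.Ici (0 : ℝ), f (finv s) = s)
    {t : ℝ} (ht : 0 ≤ t) : Real.sqrt (finv t) ≤ t / 4 := by
  have := sqrt_finv_lip h_right ht (le_refl 0)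
  rw [finv_zero h_left, Real.sqrt_zero, sub_zero, sub_zero,
    abs_of_nonneg (Real.sqrt_nonneg _), abs_of_nonneg ht] at this
  linarith

lemma finv_le (h_nonneg : ∀ s ∈ Set.Ici (0 : ℝ), finv s ∈ Set.Ici (0 : ℝ))
    (h_left : ∀ t ∈ Set.Ici (0 : ℝ), finv (f t) = t)
    (h_right : ∀ s ∈ Set.Ici (0 : ℝ), f (finv s) = s)
    {t : ℝ} (ht : 0 ≤ t) : finv t ≤ t ^ 2 / 16 := by
  have h1 := sqrt_finv_le h_left h_right ht
  have h2 : Real.sqrt (finv t) ^ 2 = finv t :=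
    Real.sq_sqrt (h_nonneg t (Set.mem_Ici.2 ht))
  nlinarith [Real.sqrt_nonneg (finv t)]

lemma continuousAt_finv (h_nonneg : ∀ s ∈ Set.Ici (0 : ℝ), finv s ∈ Set.Ici (0 : ℝ))
    (h_right : ∀ s ∈ Set.Ici (0 : ℝ), f (finv s) = s)
    {t : ℝ} (ht : 0 < t) : ContinuousAt finv t := by
  have hlip : LipschitzOnWith (1/4 : NNReal) (fun s => Real.sqrt (finv s)) (Set.Ici 0) := by
    rw [lipschitzOnWith_iff_dist_le_mul]
    intro x hx y hy
    simpa [Real.dist_eq] using sqrt_finv_lip h_right hx hy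
  have h1 : ContinuousOn (fun s => Real.sqrt (finv s) ^ 2) (Set.Ici 0) :=
    hlip.continuousOn.pow 2
  have h2 : ContinuousOn finv (Set.Ici 0) := by
    refine h1.congr fun s hs => ?_
    exact (Real.sq_sqrt (h_nonneg s hs)).symm
  exact h2.continuousAt (Ici_mem_nhds ht)

end Finv

lemma hasDerivAt_F0 {x : ℝ} (hx : 0 ≤ x) :
    HasDerivAt F0 (2 * Real.sqrt (1 + x) + 2) x := by
  have h1 : HasDerivAt (fun x : ℝ => 1 + x) 1 x := by
    simpa using (hasDerivAt_id x).const_add (1 : ℝ)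
  have h2 : HasDerivAt (fun y : ℝ => y ^ ((3:ℝ)/2)) ((3:ℝ)/2 * (1 + x) ^ ((3:ℝ)/2 - 1)) (1 + x) :=
    Real.hasDerivAt_rpow_const (Or.inr (by norm_num))
  have h3 : HasDerivAt (fun x : ℝ => (1 + x) ^ ((3:ℝ)/2))
      ((3:ℝ)/2 * (1 + x) ^ ((3:ℝ)/2 - 1) * 1) x := h2.comp x h1
  have h4 : (1 + x) ^ ((3:ℝ)/2 - 1) = Real.sqrt (1 + x) := by
    rw [show (3:ℝ)/2 - 1 = 1/2 by norm_num, Real.sqrt_eq_rpow]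
  rw [h4, mul_one] at h3
  have h5 : HasDerivAt F0 (4/3 * ((3:ℝ)/2 * Real.sqrt (1 + x)) + 2 * 1) x :=
    ((h3.sub_const 1).const_mul (4/3)).add ((hasDerivAt_id x).const_mul 2)
  convert h5 using 1
  ring

lemma hasDerivAt_f {y : ℝ} (hy : 0 < y) :
    HasDerivAt f ((Real.sqrt (1 + Real.sqrt y) + 1) / Real.sqrt y) y := by
  have h1 : HasDerivAt Real.sqrt (1 / (2 * Real.sqrt y)) y := Real.hasDerivAt_sqrt (ne_of_gt hy)
  have h2 := (hasDerivAt_F0 (Real.sqrt_nonneg y)).comp y h1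
  have hsy : 0 < Real.sqrt y := Real.sqrt_pos.2 hy
  refine h2.congr_deriv (Eq.symm ?_)
  field_simp

lemma hasDerivAt_finv {finv : ℝ → ℝ}
    (h_nonneg : ∀ s ∈ Set.Ici (0 : ℝ), finv s ∈ Set.Ici (0 : ℝ))
    (h_right : ∀ s ∈ Set.Ici (0 : ℝ), f (finv s) = s)
    {t : ℝ} (ht : 0 < t) :
    HasDerivAt finv (Real.sqrt (1 + Real.sqrt (finv t)) - 1) t := by
  have hpos : 0 < finv t := by
    rcases lt_or_eq_of_le (Set.mem_Ici.1 (h_nonneg t (Set.mem_Ici.2 ht.le))) with h | h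
    · exact h
    · exfalso
      have := h_right t (Set.mem_Ici.2 ht.le)
      rw [← h, f_zero] at this
      linarith
  have hf : HasDerivAt f ((Real.sqrt (1 + Real.sqrt (finv t)) + 1) / Real.sqrt (finv t))
      (finv t) := hasDerivAt_f hpos
  have hx : 0 < Real.sqrt (finv t) := Real.sqrt_pos.2 hpos
  have hc1 : 1 ≤ Real.sqrt (1 + Real.sqrt (finv t)) := by
    have := Real.sqrt_le_sqrt (show (1:ℝ) ≤ 1 + Real.sqrt (finv t) by linarith)
    simpa using this
  have hne : (Real.sqrt (1 + Real.sqrt (finv t)) + 1) / Real.sqrt (finv t) ≠ 0 := by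
    positivity
  have hfg : ∀ᶠ s in nhds t, f (finv s) = s := by
    filter_upwards [eventually_gt_nhds ht] with s hs
    exact h_right s (Set.mem_Ici.2 hs.le)
  have := HasDerivAt.of_local_left_inverse (continuousAt_finv h_nonneg h_right ht) hf hne hfg
  refine this.congr_deriv (Eq.symm ?_)
  rw [inv_div]
  have hc2 : Real.sqrt (1 + Real.sqrt (finv t)) ^ 2 = 1 + Real.sqrt (finv t) :=
    Real.sq_sqrt (by linarith)
  rw [eq_div_iff (by linarith)]
  nlinarith

lemma sqrt_one_add_lip {x y : ℝ} (hx : 0 ≤ x) (hy : 0 ≤ y) :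
    |Real.sqrt (1 + x) - Real.sqrt (1 + y)| ≤ 1 / 2 * |x - y| := by
  set p := Real.sqrt (1 + x) with hp
  set q := Real.sqrt (1 + y) with hq
  have hp1 : 1 ≤ p := by
    have := Real.sqrt_le_sqrt (show (1:ℝ) ≤ 1 + x by linarith)
    simpa [hp] using this
  have hq1 : 1 ≤ q := by
    have := Real.sqrt_le_sqrt (show (1:ℝ) ≤ 1 + y by linarith)
    simpa [hq] using this
  have hp2 : p ^ 2 = 1 + x := Real.sq_sqrt (by linarith)
  have hq2 : q ^ 2 = 1 + y := Real.sq_sqrt (by linarith)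
  rcases le_total p q with h | h
  · rw [abs_of_nonpos (by linarith), abs_of_nonpos (by nlinarith)]
    nlinarith
  · rw [abs_of_nonneg (by linarith), abs_of_nonneg (by nlinarith)]
    nlinarith

lemma comp_lip {finv : ℝ → ℝ}
    (h_right : ∀ s ∈ Set.Ici (0 : ℝ), f (finv s) = s)
    {s t : ℝ} (hs : 0 ≤ s) (ht : 0 ≤ t) :
    |Real.sqrt (1 + Real.sqrt (finv s)) - Real.sqrt (1 + Real.sqrt (finv t))| ≤
      1 / 8 * |s - t| := by
  calc |Real.sqrt (1 + Real.sqrt (finv s)) - Real.sqrt (1 + Real.sqrt (finv t))|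
      ≤ 1 / 2 * |Real.sqrt (finv s) - Real.sqrt (finv t)| :=
        sqrt_one_add_lip (Real.sqrt_nonneg _) (Real.sqrt_nonneg _)
    _ ≤ 1 / 2 * (1 / 4 * |s - t|) := by
        have := sqrt_finv_lip h_right hs ht
        linarith
    _ = 1 / 8 * |s - t| := by ring

lemma D1_lip {finv : ℝ → ℝ}
    (h_left : ∀ t ∈ Set.Ici (0 : ℝ), finv (f t) = t)
    (h_right : ∀ s ∈ Set.Ici (0 : ℝ), f (finv s) = s)
    (u : ℝ) :
    ∀ a b : ℝ,
      |(if a ≤ u then (1:ℝ) else Real.sqrt (1 + Real.sqrt (finv (a - u)))) -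
        (if b ≤ u then (1:ℝ) else Real.sqrt (1 + Real.sqrt (finv (b - u))))| ≤
      1 / 8 * |a - b| := by
  have h1 : Real.sqrt (1 + Real.sqrt (finv 0)) = 1 := by
    rw [finv_zero h_left]; simp
  have key : ∀ a b : ℝ, a ≤ b →
      |(if a ≤ u then (1:ℝ) else Real.sqrt (1 + Real.sqrt (finv (a - u)))) -
        (if b ≤ u then (1:ℝ) else Real.sqrt (1 + Real.sqrt (finv (b - u))))| ≤
      1 / 8 * |a - b| := by
    intro a b hab
    rcases le_or_gt b u with hb | hb
    · rw [if_pos (hab.trans hb), if_pos hb]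
      simp [abs_nonneg]
    · rw [if_neg (not_le.2 hb)]
      rcases le_or_gt a u with ha | ha
      · rw [if_pos ha]
        have hcl := comp_lip h_right (le_refl 0) (by linarith : (0:ℝ) ≤ b - u)
        rw [h1] at hcl
        have h2 : |(0:ℝ) - (b - u)| = b - u := by
          rw [abs_of_nonpos (by linarith)]; ring
        rw [h2] at hcl
        rw [abs_of_nonpos (by linarith : a - b ≤ 0)]
        linarith
      · rw [if_neg (not_le.2 ha)]
        have := comp_lip h_right (by linarith : (0:ℝ) ≤ a - u)
          (by linarith : (0:ℝ) ≤ b - u)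
        have e : a - u - (b - u) = a - b := by ring
        rwa [e] at this
  intro a b
  rcases le_total a b with h | h
  · exact key a b h
  · rw [abs_sub_comm, abs_sub_comm a b]
    exact key b a h

/-- the curves γ_u are C^{1,1}: at s = u the left and right
derivatives agree and equal (1,1), and the derivative is Lipschitz near u. -/
theorem gamma_u_C11 (finv : ℝ → ℝ)
    (h_nonneg : ∀ s ∈ Set.Ici (0 : ℝ), finv s ∈ Set.Ici (0 : ℝ))
    (h_left : ∀ t ∈ Set.Ici (0 : ℝ), finv (f t) = t)
    (h_right : ∀ s ∈ Set.Ici (0 : ℝ), f (finv s) = s) :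
    ∀ u : ℝ, 0 < u →
      (HasDerivWithinAt
        (fun s : ℝ => ((if s ≤ u then s else s + finv (s - u), s) : ℝ × ℝ))
        ((1 : ℝ), (1 : ℝ)) (Set.Iic u) u) ∧
      (HasDerivWithinAt
        (fun s : ℝ => ((if s ≤ u then s else s + finv (s - u), s) : ℝ × ℝ))
        ((1 : ℝ), (1 : ℝ)) (Set.Ici u) u) ∧
      (∃ ε > (0 : ℝ), ∃ K : NNReal,
        LipschitzOnWith K
          (deriv (fun s : ℝ =>
            ((if s ≤ u then s else s + finv (s - u), s) : ℝ × ℝ)))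
          (Set.Ioo (u - ε) (u + ε))) := by
  intro u hu
  set F : ℝ → ℝ × ℝ :=
    fun s : ℝ => ((if s ≤ u then s else s + finv (s - u), s) : ℝ × ℝ) with hF
  have hfinv0 : finv 0 = 0 := finv_zero h_left
  -- left derivative
  have hIic : HasDerivWithinAt F ((1 : ℝ), (1 : ℝ)) (Set.Iic u) u := by
    have base : HasDerivWithinAt (fun s : ℝ => ((s, s) : ℝ × ℝ)) ((1:ℝ), (1:ℝ))
        (Set.Iic u) u :=
      (hasDerivWithinAt_id u _).prodMk (hasDerivWithinAt_id u _)
    refine base.congr (fun s hs => ?_) ?_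
    · simp [hF, if_pos (Set.mem_Iic.1 hs)]
    · simp [hF]
  -- right derivative
  have hg0 : HasDerivWithinAt (fun s : ℝ => finv (s - u)) 0 (Set.Ici u) u := by
    rw [hasDerivWithinAt_iff_isLittleO]
    rw [Asymptotics.isLittleO_iff]
    intro c hc
    have hev1 : ∀ᶠ x in nhdsWithin u (Set.Ici u), |x - u| < 16 * c :=
      nhdsWithin_le_nhds (eventually_abs_sub_lt u (by positivity))
    filter_upwards [hev1, eventually_mem_nhdsWithin] with x hx1 hx2
    have hxu : 0 ≤ x - u := by simpa using Set.mem_Ici.1 hx2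
    have hb1 : finv (x - u) ≤ (x - u) ^ 2 / 16 := finv_le h_nonneg h_left h_right hxu
    have hb0 : 0 ≤ finv (x - u) := h_nonneg _ (Set.mem_Ici.2 hxu)
    have habs : |x - u| = x - u := abs_of_nonneg hxu
    rw [Real.norm_eq_abs, Real.norm_eq_abs]
    simp only [sub_self, hfinv0, sub_zero, smul_zero]
    rw [abs_of_nonneg hb0, habs]
    nlinarith [hx1, habs]
  have hIci : HasDerivWithinAt F ((1 : ℝ), (1 : ℝ)) (Set.Ici u) u := by
    have base1 : HasDerivWithinAt (fun s : ℝ => s + finv (s - u)) (1 + 0) (Set.Ici u) u :=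
      (hasDerivWithinAt_id u _).add hg0
    rw [add_zero] at base1
    have base : HasDerivWithinAt (fun s : ℝ => ((s + finv (s - u), s) : ℝ × ℝ))
        ((1:ℝ), (1:ℝ)) (Set.Ici u) u := base1.prodMk (hasDerivWithinAt_id u _)
    refine base.congr (fun s hs => ?_) ?_
    · rcases le_or_gt s u with h | h
      · have : s = u := le_antisymm h (Set.mem_Ici.1 hs)
        simp [hF, this, hfinv0]
      · simp [hF, if_neg (not_le.2 h)]
    · simp [hF, hfinv0]
  refine ⟨hIic, hIci, u, hu, 1/8, ?_⟩
  -- the derivative equals D everywhere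
  have hDerivAt : HasDerivAt F ((1 : ℝ), (1 : ℝ)) u := by
    have := hIic.union hIci
    rwa [Set.Iic_union_Ici, hasDerivWithinAt_univ] at this
  set D : ℝ → ℝ × ℝ := fun s : ℝ =>
    ((if s ≤ u then (1:ℝ) else Real.sqrt (1 + Real.sqrt (finv (s - u))), (1:ℝ)) : ℝ × ℝ)
    with hD
  have hderiv : ∀ s, deriv F s = D s := by
    intro s
    rcases lt_trichotomy s u with h | h | h
    · have hev : F =ᶠ[nhds s] fun x : ℝ => ((x, x) : ℝ × ℝ) := by
        filter_upwards [eventually_lt_nhds h] with x hx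
        simp [hF, if_pos hx.le]
      rw [hev.deriv_eq]
      have hid : HasDerivAt (fun x : ℝ => ((x, x) : ℝ × ℝ)) ((1:ℝ), (1:ℝ)) s :=
        (hasDerivAt_id s).prodMk (hasDerivAt_id s)
      rw [hid.deriv]
      simp [hD, if_pos h.le]
    · subst h
      rw [hDerivAt.deriv]
      simp [hD]
    · have hev : F =ᶠ[nhds s] fun x : ℝ => ((x + finv (x - u), x) : ℝ × ℝ) := by
        filter_upwards [eventually_gt_nhds h] with x hx
        simp [hF, if_neg (not_le.2 hx)]
      rw [hev.deriv_eq]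
      have hsub : HasDerivAt (fun x : ℝ => x - u) 1 s := (hasDerivAt_id s).sub_const u
      have hfd : HasDerivAt (fun x : ℝ => finv (x - u))
          ((Real.sqrt (1 + Real.sqrt (finv (s - u))) - 1) * 1) s :=
        (hasDerivAt_finv h_nonneg h_right (by linarith : (0:ℝ) < s - u)).comp s hsub
      have hall : HasDerivAt (fun x : ℝ => ((x + finv (x - u), x) : ℝ × ℝ))
          ((1 + (Real.sqrt (1 + Real.sqrt (finv (s - u))) - 1) * 1, 1) : ℝ × ℝ) s :=
        ((hasDerivAt_id s).add hfd).prodMk (hasDerivAt_id s)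
      rw [hall.deriv]
      have : (1:ℝ) + (Real.sqrt (1 + Real.sqrt (finv (s - u))) - 1) * 1 =
          Real.sqrt (1 + Real.sqrt (finv (s - u))) := by ring
      rw [this]
      simp [hD, if_neg (not_le.2 h)]
  rw [lipschitzOnWith_iff_dist_le_mul]
  intro x _ y _
  rw [hderiv x, hderiv y]
  have hdd : dist (D x) (D y) =
      |(if x ≤ u then (1:ℝ) else Real.sqrt (1 + Real.sqrt (finv (x - u)))) -
        (if y ≤ u then (1:ℝ) else Real.sqrt (1 + Real.sqrt (finv (y - u))))| := by
    rw [Prod.dist_eq]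
    simp [hD, Real.dist_eq]
  rw [hdd, Real.dist_eq]
  have hK : ((1/8 : NNReal) : ℝ) = 1/8 := by norm_num
  rw [hK]
  exact D1_lip h_left h_right u x y
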